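/- Let A_χ(M) be a χ-algebra for a matroid M on a linearly ordered ground set, and let e_J be a nonzero pure element of degree ℓ. Write [e_J] = Σ ξ(I,J)[e_I] over NBC sets I of size ℓ. Then ξ(I,J) ≠ 0 if and only if Flag(I) = Flag(J^τ) for some permutation τ, and in that case ξ(I,J) = χ(I)/χ(J^τ). In particular, in the Orlik-Solomon algebra ξ(I,J) = sgn(τ). -/

import Mathlib

open scoped BigOperators
open scoped Matroid

/-- A circuit: a minimal dependent set. -/
def IsCircuit {n : ℕ} (M : Matroid (Fin n)) (C : Finset (Fin n)) : Prop :=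
  M.Dep ↑C ∧ ∀ D : Finset (Fin n), D ⊂ C → ¬ M.Dep ↑D

/-- A broken circuit: a circuit (of size > 1) with its minimum removed. -/
def IsBrokenCircuit {n : ℕ} (M : Matroid (Fin n)) (B : Finset (Fin n)) : Prop :=
  ∃ (C : Finset (Fin n)) (a : Fin n), IsCircuit M C ∧ 1 < C.card ∧ a ∈ C ∧
    (∀ b ∈ C, a ≤ b) ∧ B = C.erase a

/-- A no-broken-circuit set. -/
def NBCSet {n : ℕ} (M : Matroid (Fin n)) (I : Finset (Fin n)) : Prop :=
  M.Indep ↑I ∧ ∀ B ⊆ I, ¬ IsBrokenCircuit M B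

/-- A unidependent set: contains exactly one circuit. -/
def Unidep {n : ℕ} (M : Matroid (Fin n)) (U : Finset (Fin n)) : Prop :=
  ↑U ⊆ M.E ∧ ∃! C : Finset (Fin n), C ⊆ U ∧ IsCircuit M C

/-- x is a loop. -/
def IsLoopM {n : ℕ} (M : Matroid (Fin n)) (x : Fin n) : Prop := M.Dep {x}

/-- Deletion of a single element. -/
noncomputable def mdel {n : ℕ} (M : Matroid (Fin n)) (x : Fin n) : Matroid (Fin n) :=
  M ↾ (M.E \ {x})

/-- Contraction of a single element, via duality. -/
noncomputable def mcon {n : ℕ} (M : Matroid (Fin n)) (x : Fin n) : Matroid (Fin n) :=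
  (M✶ ↾ (M.E \ {x}))✶

open scoped Classical in
/-- The rank of a finite set: maximal cardinality of an independent subset. -/
noncomputable def rkFin {n : ℕ} (M : Matroid (Fin n)) (U : Finset (Fin n)) : ℕ :=
  (U.powerset.filter fun I : Finset (Fin n) => M.Indep (↑I : Set (Fin n))).sup Finset.card

/-- A simple matroid with ground set everything. -/
def SimpleGround {n : ℕ} (M : Matroid (Fin n)) : Prop :=
  M.E = Set.univ ∧ (∀ i : Fin n, M.Indep {i}) ∧
    ∀ i j : Fin n, i ≠ j → M.Indep {i, j}

/-- Number of inversions of a list. -/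
def listInv {n : ℕ} : List (Fin n) → ℕ
  | [] => 0
  | a :: t => (t.countP fun b => decide (b < a)) + listInv t

/-- χ evaluated on an ordered set, with the sign convention χ(X^σ) = sgn(σ) χ(X). -/
def ochi {n : ℕ} {K : Type*} [Field K] (χ : Finset (Fin n) → K) (l : List (Fin n)) : K :=
  (-1 : K) ^ listInv l * χ l.toFinset

/-- The flag of flats associated to an ordered set: closures of its suffixes. -/
def flagOf {n : ℕ} (M : Matroid (Fin n)) (l : List (Fin n)) : List (Set (Fin n)) :=
  l.tails.map fun t => M.closure ↑t.toFinset

/-- An element `b` is active in `I`: it lies in `cl(I) \ I` and is the minimum of the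
(unique) circuit contained in `I ∪ {b}`. -/
def ActiveIn {n : ℕ} (M : Matroid (Fin n)) (I : Finset (Fin n)) (b : Fin n) : Prop :=
  b ∈ M.closure ↑I ∧ b ∉ I ∧
    ∃ C : Finset (Fin n), C ⊆ insert b I ∧ IsCircuit M C ∧ ∀ c ∈ C, b ≤ c


/-- An inactive unidependent set: `min C(U)` is the minimal active element of
`U \\ min C(U)`. -/
def InactiveUnidep {n : ℕ} (M : Matroid (Fin n)) (U : Finset (Fin n)) : Prop :=
  Unidep M U ∧ ∃ (C : Finset (Fin n)) (a : Fin n), C ⊆ U ∧ IsCircuit M C ∧ a ∈ C ∧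
    (∀ b ∈ C, a ≤ b) ∧ ∀ b : Fin n, ActiveIn M (U.erase a) b → a ≤ b

section Alg

variable {n : ℕ} {K : Type*} [Field K]

/-- The defining relations of the graded algebra `E`: squares of generators vanish and
generators commute up to the nonzero scalars `β i j` (for `i < j`). -/
inductive ERel (n : ℕ) (K : Type*) [Field K] (β : Fin n → Fin n → K) :
    FreeAlgebra K (Fin n) → FreeAlgebra K (Fin n) → Prop
  | sq (i : Fin n) : ERel n K β (FreeAlgebra.ι K i * FreeAlgebra.ι K i) 0
  | comm {i j : Fin n} (h : i < j) :
      ERel n K β (FreeAlgebra.ι K j * FreeAlgebra.ι K i)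
        (β i j • (FreeAlgebra.ι K i * FreeAlgebra.ι K j))

/-- The algebra `E` generated by `e_1, …, e_n` with `e_i² = 0`, `e_j e_i = β i j • e_i e_j`. -/
abbrev EAlg (n : ℕ) (K : Type*) [Field K] (β : Fin n → Fin n → K) := RingQuot (ERel n K β)

/-- The generator `e_i` of `E`. -/
noncomputable def gen (β : Fin n → Fin n → K) (i : Fin n) : EAlg n K β :=
  RingQuot.mkAlgHom K (ERel n K β) (FreeAlgebra.ι K i)

/-- `e_X`: the product of the generators indexed by `X`, in increasing order. -/
noncomputable def eset (β : Fin n → Fin n → K) (X : Finset (Fin n)) : EAlg n K β :=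
  ((X.sort (· ≤ ·)).map (gen β)).prod

/-- The χ-boundary `∂e_X = Σ_p (-1)^p χ(X \ i_p) e_{X \ i_p}` (with `X = {i_1 < … < i_m}`,
`p` running from 1 to m). -/
noncomputable def bdry (β : Fin n → Fin n → K) (χ : Finset (Fin n) → K)
    (X : Finset (Fin n)) : EAlg n K β :=
  ((X.sort (· ≤ ·)).zipIdx.map fun pi =>
    ((-1 : K) ^ (pi.2 + 1) * χ (X.erase pi.1)) • eset β (X.erase pi.1)).sum

end Alg

section Chi

variable {n : ℕ} {K : Type*} [Field K]

/-- Condition (UC1). -/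
def UC1 (M : Matroid (Fin n)) (χ : Finset (Fin n) → K) : Prop :=
  ∀ I : Finset (Fin n), χ I ≠ 0 ↔ M.Indep ↑I

/-- Condition (UC2). -/
def UC2 (β : Fin n → Fin n → K) (M : Matroid (Fin n)) (χ : Finset (Fin n) → K) : Prop :=
  ∀ U U' : Finset (Fin n), Unidep M U → Unidep M U' → U' ⊆ U →
    ∃ ε : K, ε ≠ 0 ∧ bdry β χ U = ε • (bdry β χ U' * eset β (U \ U'))

/-- The (right) ideal `I_χ(M)` of `E`, as a `K`-subspace: it is spanned by the products
of the boundaries of circuits of size `> 1` (and of the generators indexed by loops)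
with arbitrary elements of `E`. -/
noncomputable def chiIdeal (β : Fin n → Fin n → K) (M : Matroid (Fin n))
    (χ : Finset (Fin n) → K) : Submodule K (EAlg n K β) :=
  Submodule.span K
    ({ y | ∃ C : Finset (Fin n), IsCircuit M C ∧ 1 < C.card ∧
        ∃ z : EAlg n K β, y = bdry β χ C * z } ∪
     { y | ∃ i : Fin n, IsCircuit M {i} ∧ ∃ z : EAlg n K β, y = gen β i * z })

/-- The χ-algebra `A_χ(M) = E / I_χ(M)` (as a `K`-vector space). -/
abbrev AChi (β : Fin n → Fin n → K) (M : Matroid (Fin n)) (χ : Finset (Fin n) → K) :=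
  EAlg n K β ⧸ chiIdeal β M χ

/-- The residue class `[e_X]` in `A_χ(M)`. -/
noncomputable def cls (β : Fin n → Fin n → K) (M : Matroid (Fin n))
    (χ : Finset (Fin n) → K) (X : Finset (Fin n)) : AChi β M χ :=
  Submodule.Quotient.mk (eset β X)

/-- The induced map `χ_{M/x}`, `I ↦ χ(I * x)`. -/
def chiC (χ : Finset (Fin n) → K) (x : Fin n) : Finset (Fin n) → K :=
  fun I => ochi χ (I.sort (· ≤ ·) ++ [x])

/-- Iterated single-element contraction along a list (the head is contracted last). -/
noncomputable def contrList (M : Matroid (Fin n)) : List (Fin n) → Matroid (Fin n)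
  | [] => M
  | x :: t => mcon (contrList M t) x

/-- Iterated induced `χ` along a list. -/
def chiL (χ : Finset (Fin n) → K) : List (Fin n) → (Finset (Fin n) → K)
  | [] => χ
  | x :: t => chiC (chiL χ t) x

/-- The iterated residue `p_{I^σ} = p_{i_{σ(1)}} ∘ ⋯ ∘ p_{i_{σ(ℓ)}}` associated to a family
`P` of single-element residue maps and an ordered set (a list). -/
noncomputable def pIter (β : Fin n → Fin n → K)
    (P : ∀ (M : Matroid (Fin n)) (χ : Finset (Fin n) → K) (x : Fin n),
      AChi β M χ →ₗ[K] AChi β (mcon M x) (chiC χ x))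
    (M : Matroid (Fin n)) (χ : Finset (Fin n) → K) :
    (l : List (Fin n)) → (AChi β M χ →ₗ[K] AChi β (contrList M l) (chiL χ l))
  | [] => LinearMap.id
  | x :: t => (P (contrList M t) (chiL χ t) x).comp (pIter β P M χ t)

/-- The defining property of the residue map `p_x` on (classes of) independent sets. -/
def ResFormula (β : Fin n → Fin n → K)
    (P : ∀ (M : Matroid (Fin n)) (χ : Finset (Fin n) → K) (x : Fin n),
      AChi β M χ →ₗ[K] AChi β (mcon M x) (chiC χ x)) : Prop :=
  ∀ (M : Matroid (Fin n)) (χ : Finset (Fin n) → K) (x : Fin n), ¬ IsLoopM M x →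
    ∀ I : Finset (Fin n), M.Indep ↑I →
      (x ∈ I → P M χ x (cls β M χ I) = cls β (mcon M x) (chiC χ x) (I.erase x)) ∧
      (∀ y ∈ I, IsCircuit M {x, y} → P M χ x (cls β M χ I) =
        (ochi χ ((I.erase y).sort (· ≤ ·) ++ [x]) /
          ochi χ ((I.erase y).sort (· ≤ ·) ++ [y])) •
            cls β (mcon M x) (chiC χ x) (I.erase y)) ∧
      (x ∉ I → (∀ y ∈ I, ¬ IsCircuit M {x, y}) → P M χ x (cls β M χ I) = 0)

end Chi

section Model
open scoped Classical

variable {n : ℕ} {K : Type*} [Field K]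

/-- twist coefficient -/
noncomputable def co (β : Fin n → Fin n → K) (i : Fin n) (X : Finset (Fin n)) : K :=
  ∏ j ∈ X, if j < i then β j i else 1

abbrev TT (n : ℕ) (K : Type*) [Field K] := Finset (Fin n) →₀ K

noncomputable def Lgen (β : Fin n → Fin n → K) (i : Fin n) : TT n K →ₗ[K] TT n K :=
  Finsupp.lsum K (fun X => if i ∈ X then (0 : K →ₗ[K] TT n K)
    else co β i X • (Finsupp.lsingle (insert i X)))

lemma Lgen_single_mem (β : Fin n → Fin n → K) {i : Fin n} {X : Finset (Fin n)} (h : i ∈ X)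
    (a : K) : Lgen β i (Finsupp.single X a) = 0 := by
  simp [Lgen, h]

lemma Lgen_single_not_mem (β : Fin n → Fin n → K) {i : Fin n} {X : Finset (Fin n)} (h : i ∉ X)
    (a : K) :
    Lgen β i (Finsupp.single X a) = Finsupp.single (insert i X) (co β i X * a) := by
  simp [Lgen, h, Finsupp.smul_single]

lemma Lgen_rel_sq (β : Fin n → Fin n → K) (i : Fin n) :
    (Lgen β i : Module.End K (TT n K)) * Lgen β i = 0 := by
  apply Finsupp.lhom_ext (fun X a => ?_)
  by_cases h : i ∈ X
  · rw [Module.End.mul_apply, Lgen_single_mem β h, map_zero]; rfl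
  · rw [Module.End.mul_apply, Lgen_single_not_mem β h,
      Lgen_single_mem β (Finset.mem_insert_self i X)]; rfl

lemma co_insert (β : Fin n → Fin n → K) (i j : Fin n) (X : Finset (Fin n)) (h : j ∉ X) :
    co β i (insert j X) = (if j < i then β j i else 1) * co β i X := by
  simp [co, Finset.prod_insert h]

lemma Lgen_rel_comm (β : Fin n → Fin n → K) {i j : Fin n} (h : i < j) :
    (Lgen β j : Module.End K (TT n K)) * Lgen β i
      = β i j • ((Lgen β i : Module.End K (TT n K)) * Lgen β j) := by
  apply Finsupp.lhom_ext (fun X a => ?_)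
  have hij : i ≠ j := ne_of_lt h
  rw [LinearMap.smul_apply, Module.End.mul_apply, Module.End.mul_apply]
  by_cases hi : i ∈ X
  · rw [Lgen_single_mem β hi, map_zero]
    by_cases hj : j ∈ X
    · rw [Lgen_single_mem β hj, map_zero, smul_zero]
    · rw [Lgen_single_not_mem β hj, Lgen_single_mem β (by simp [hi] : i ∈ insert j X), smul_zero]
  · by_cases hj : j ∈ X
    · rw [Lgen_single_mem β hj, map_zero, Lgen_single_not_mem β hi,
        Lgen_single_mem β (by simp [hj] : j ∈ insert i X), smul_zero]
    · rw [Lgen_single_not_mem β hi, Lgen_single_not_mem β hj,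
        Lgen_single_not_mem β (by simp [Ne.symm hij, hj] : j ∉ insert i X),
        Lgen_single_not_mem β (by simp [hi, fun hh : i = j => hij hh] : i ∉ insert j X)]
      rw [Finset.insert_comm, co_insert β j i X hi, co_insert β i j X hj,
        if_pos h, if_neg (not_lt.2 h.le), Finsupp.smul_single, smul_eq_mul]
      congr 1
      ring

/-- The representation of `EAlg` on `TT`. -/
noncomputable def Th (β : Fin n → Fin n → K) : EAlg n K β →ₐ[K] Module.End K (TT n K) :=
  RingQuot.liftAlgHom K (s := ERel n K β)
    ⟨FreeAlgebra.lift K (fun i => (Lgen β i : Module.End K (TT n K))), by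
      intro x y hxy
      induction hxy with
      | sq i => simp [Lgen_rel_sq]
      | comm h => simp [Lgen_rel_comm _ h]⟩

lemma Th_gen (β : Fin n → Fin n → K) (i : Fin n) :
    Th β (gen β i) = (Lgen β i : Module.End K (TT n K)) := by
  simp [Th, gen, RingQuot.liftAlgHom_mkAlgHom_apply]

/-- evaluation of the representation at `δ_∅`. -/
noncomputable def Phi (β : Fin n → Fin n → K) : EAlg n K β →ₗ[K] TT n K where
  toFun z := Th β z (Finsupp.single ∅ 1)
  map_add' x y := by simp
  map_smul' c x := by simp

lemma Phi_mul (β : Fin n → Fin n → K) (x z : EAlg n K β) :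
    Phi β (x * z) = Th β x (Phi β z) := by
  simp [Phi, map_mul]

/-- action of a product of generators on a single. -/
lemma prodgen_act (β : Fin n → Fin n → K) (l : List (Fin n)) (Z : Finset (Fin n)) (b : K) :
    ∃ γ : K, Th β ((l.map (gen β)).prod) (Finsupp.single Z b)
        = Finsupp.single (l.toFinset ∪ Z) (γ * b) ∧
      (¬ Disjoint l.toFinset Z → γ = 0) := by
  induction l with
  | nil =>
      refine ⟨1, by simp, fun hd => absurd (by simp) hd⟩
  | cons x t ih =>
      obtain ⟨γ, hγ, hγ0⟩ := ih
      rw [List.map_cons, List.prod_cons, map_mul, Module.End.mul_apply, hγ]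
      by_cases hx : x ∈ t.toFinset ∪ Z
      · refine ⟨0, ?_, fun _ => rfl⟩
        rw [Th_gen, Lgen_single_mem β hx]
        simp
      · refine ⟨co β x (t.toFinset ∪ Z) * γ, ?_, ?_⟩
        · rw [Th_gen, Lgen_single_not_mem β hx]
          rw [show insert x (t.toFinset ∪ Z) = (x :: t).toFinset ∪ Z by
            simp [Finset.insert_union]]
          rw [mul_assoc]
        · intro hd
          have hd' : ¬ Disjoint t.toFinset Z ∨ x ∈ Z := by
            by_contra hc
            push_neg at hc
            apply hd
            rw [List.toFinset_cons, Finset.disjoint_left]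
            intro a ha haZ
            rcases Finset.mem_insert.1 ha with rfl | ha'
            · exact hc.2 haZ
            · exact (Finset.disjoint_left.1 hc.1) ha' haZ
          rcases hd' with hd' | hd'
          · rw [hγ0 hd', mul_zero]
          · exact absurd (Finset.mem_union_right _ hd') hx

/-- sorted case: coefficient 1. -/
lemma prodgen_act_sorted (β : Fin n → Fin n → K) (l : List (Fin n)) (hl : l.Pairwise (· < ·)) :
    Th β ((l.map (gen β)).prod) (Finsupp.single ∅ (1:K)) = Finsupp.single l.toFinset 1 := by
  induction l with
  | nil => simp
  | cons x t ih =>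
      rw [List.map_cons, List.prod_cons, map_mul, Module.End.mul_apply,
        ih hl.of_cons, Th_gen]
      have hx : x ∉ t.toFinset := by
        simp only [List.mem_toFinset]
        intro hmem
        exact absurd rfl (ne_of_lt (List.rel_of_pairwise_cons hl hmem))
      rw [Lgen_single_not_mem β hx]
      have : co β x t.toFinset = 1 := by
        apply Finset.prod_eq_one
        intro j hj
        rw [if_neg (not_lt.2 (List.rel_of_pairwise_cons hl (List.mem_toFinset.1 hj)).le)]
      rw [this, one_mul, List.toFinset_cons]

lemma Phi_eset (β : Fin n → Fin n → K) (X : Finset (Fin n)) :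
    Phi β (eset β X) = Finsupp.single X 1 := by
  have := prodgen_act_sorted β (X.sort (· ≤ ·)) ((List.sortedLT_iff_pairwise.1 (Finset.sortedLT_sort X)))
  simp only [Phi, eset, LinearMap.coe_mk, AddHom.coe_mk]
  rw [this, Finset.sort_toFinset]

/-! ### Matroid utilities -/

variable {M : Matroid (Fin n)}

lemma dep_iff_not_indep (hE : M.E = Set.univ) {S : Set (Fin n)} :
    M.Dep S ↔ ¬ M.Indep S := by
  rw [Matroid.Dep, hE]
  simp [Set.subset_univ]

lemma subset_ground_univ (hE : M.E = Set.univ) (S : Set (Fin n)) : S ⊆ M.E := by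
  rw [hE]; exact Set.subset_univ _

lemma mem_closure_mono {S T : Set (Fin n)} {x : Fin n} (hx : x ∈ M.closure S)
    (h : S ⊆ T) : x ∈ M.closure T := M.closure_subset_closure h hx

lemma mem_closure_trans (hE : M.E = Set.univ) {S T : Set (Fin n)} {x : Fin n}
    (hx : x ∈ M.closure S) (h : S ⊆ M.closure T) : x ∈ M.closure T := by
  have h2 := M.closure_subset_closure (X := S) (Y := M.closure T) h
  rw [M.closure_closure] at h2
  exact h2 hx

lemma exists_circuit_subset (hE : M.E = Set.univ) {X : Finset (Fin n)} (hX : M.Dep ↑X) :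
    ∃ C ⊆ X, IsCircuit M C := by
  classical
  induction X using Finset.strongInductionOn with
  | _ X ih =>
    by_cases h : ∃ D ⊂ X, M.Dep ↑D
    · obtain ⟨D, hDX, hD⟩ := h
      obtain ⟨C, hCD, hC⟩ := ih D hDX hD
      exact ⟨C, hCD.trans hDX.subset, hC⟩
    · push_neg at h
      exact ⟨X, subset_rfl, hX, fun D hD => h D hD⟩

lemma circuit_indep_of_ssubset (hE : M.E = Set.univ) {C D : Finset (Fin n)}
    (hC : IsCircuit M C) (hD : D ⊂ C) : M.Indep ↑D := by
  by_contra h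
  exact hC.2 D hD ((dep_iff_not_indep hE).2 h)

lemma circuit_erase_indep (hE : M.E = Set.univ) {C : Finset (Fin n)} (hC : IsCircuit M C)
    {c : Fin n} (hc : c ∈ C) : M.Indep ↑(C.erase c) :=
  circuit_indep_of_ssubset hE hC (Finset.erase_ssubset hc)

lemma circuit_mem_closure_erase (hE : M.E = Set.univ) {C : Finset (Fin n)}
    (hC : IsCircuit M C) {c : Fin n} (hc : c ∈ C) :
    c ∈ M.closure ↑(C.erase c) := by
  have hI : M.Indep ↑(C.erase c) := circuit_erase_indep hE hC hc
  by_contra h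
  have hcE : c ∈ M.E := by rw [hE]; trivial
  have hind : M.Indep (insert c ↑(C.erase c)) := by
    rw [hI.insert_indep_iff_of_notMem (by simp)]
    exact ⟨hcE, h⟩
  have hCeq : insert c (↑(C.erase c) : Set (Fin n)) = ↑C := by
    rw [Finset.coe_erase, Set.insert_diff_singleton, Set.insert_eq_of_mem (by exact_mod_cast hc)]
  rw [hCeq] at hind
  exact (dep_iff_not_indep hE).1 hC.1 hind

/-- weak circuit elimination -/
lemma circuit_elim (hE : M.E = Set.univ) {C₁ C₂ : Finset (Fin n)} (h1 : IsCircuit M C₁)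
    (h2 : IsCircuit M C₂) (hne : C₁ ≠ C₂) {e : Fin n} (he1 : e ∈ C₁) (he2 : e ∈ C₂) :
    M.Dep ↑((C₁ ∪ C₂).erase e) := by
  rw [dep_iff_not_indep hE]
  intro hA
  obtain ⟨f, hf2, hf1⟩ : ∃ f ∈ C₂, f ∉ C₁ := by
    by_contra hcon
    push_neg at hcon
    have hsub : C₂ ⊆ C₁ := hcon
    rcases eq_or_ssubset_of_subset hsub with rfl | hss
    · exact hne rfl
    · exact (dep_iff_not_indep hE).1 h2.1 (circuit_indep_of_ssubset hE h1 hss)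
  have hfe : f ≠ e := fun h => hf1 (h ▸ he1)
  set D : Finset (Fin n) := (C₁ ∪ C₂).erase e with hD
  have hfD : f ∈ D := Finset.mem_erase.2 ⟨hfe, Finset.mem_union_right _ hf2⟩
  have h1sub : (↑(C₁.erase e) : Set (Fin n)) ⊆ ↑(D.erase f) := by
    intro x hx
    rw [Finset.mem_coe] at hx ⊢
    rw [Finset.mem_erase] at hx ⊢
    exact ⟨fun h => hf1 (h ▸ hx.2), Finset.mem_erase.2 ⟨hx.1, Finset.mem_union_left _ hx.2⟩⟩
  have heclD : e ∈ M.closure ↑(D.erase f) :=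
    mem_closure_mono (circuit_mem_closure_erase hE h1 he1) h1sub
  have h2sub : (↑(C₂.erase f) : Set (Fin n)) ⊆ M.closure ↑(D.erase f) := by
    intro x hx
    rw [Finset.mem_coe, Finset.mem_erase] at hx
    by_cases hxe : x = e
    · exact hxe ▸ heclD
    · apply M.subset_closure _ (subset_ground_univ hE _)
      rw [Finset.mem_coe, Finset.mem_erase]
      exact ⟨hx.1, Finset.mem_erase.2 ⟨hxe, Finset.mem_union_right _ hx.2⟩⟩
  have hfcl : f ∈ M.closure ↑(D.erase f) :=
    mem_closure_trans hE (circuit_mem_closure_erase hE h2 hf2) h2sub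
  have hnot : f ∉ M.closure (↑D \ {f}) := hA.notMem_closure_diff_of_mem hfD
  rw [← Finset.coe_erase] at hnot
  exact hnot hfcl

lemma unidep_of_circuit (hE : M.E = Set.univ) {C : Finset (Fin n)} (hC : IsCircuit M C) :
    Unidep M C := by
  refine ⟨subset_ground_univ hE _, C, ⟨subset_rfl, hC⟩, ?_⟩
  rintro C' ⟨hsub, hC'⟩
  rcases eq_or_ssubset_of_subset hsub with h | h
  · exact h
  · exact absurd (circuit_indep_of_ssubset hE hC h) ((dep_iff_not_indep hE).1 hC'.1)

lemma unidep_erase_indep_iff (hE : M.E = Set.univ) {U C : Finset (Fin n)}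
    (hU : Unidep M U) (hCU : C ⊆ U) (hC : IsCircuit M C) {u : Fin n} :
    M.Indep ↑(U.erase u) ↔ u ∈ C := by
  obtain ⟨Cu, hCu, huniq⟩ := hU.2
  have hCeq : C = Cu := huniq C ⟨hCU, hC⟩
  constructor
  · intro h
    by_contra huC
    have hsub : C ⊆ U.erase u := fun x hx => Finset.mem_erase.2 ⟨fun hh => huC (hh ▸ hx), hCU hx⟩
    exact (dep_iff_not_indep hE).1 hC.1 (h.subset (Finset.coe_subset.2 hsub))
  · intro huC
    by_contra h
    obtain ⟨C', hC'sub, hC'⟩ := exists_circuit_subset hE ((dep_iff_not_indep hE).2 h)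
    have e1 : C' = Cu := huniq C' ⟨hC'sub.trans (Finset.erase_subset _ _), hC'⟩
    rw [e1, ← hCeq] at hC'sub
    exact (Finset.mem_erase.1 (hC'sub huC)).1 rfl

lemma not_unidep_all_erase_dep (hE : M.E = Set.univ) {C Z : Finset (Fin n)}
    (hC : IsCircuit M C) (hnuni : ¬ Unidep M (C ∪ Z))
    {c : Fin n} (hc : c ∈ C) : M.Dep ↑((C ∪ Z).erase c) := by
  have hCsub : C ⊆ C ∪ Z := Finset.subset_union_left
  have hex : ∃ C₂, (C₂ ⊆ C ∪ Z ∧ IsCircuit M C₂) ∧ C₂ ≠ C := by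
    by_contra hcon
    push_neg at hcon
    exact hnuni ⟨subset_ground_univ hE _, C, ⟨hCsub, hC⟩,
      fun C' hC' => hcon C' hC'⟩
  obtain ⟨C₂, ⟨hC₂sub, hC₂⟩, hC₂ne⟩ := hex
  by_cases hcC₂ : c ∈ C₂
  · have helim := circuit_elim hE hC₂ hC hC₂ne hcC₂ hc
    apply helim.superset _ (subset_ground_univ hE _)
    apply Finset.coe_subset.2
    exact Finset.erase_subset_erase _ (Finset.union_subset hC₂sub hCsub)
  · apply hC₂.1.superset _ (subset_ground_univ hE _)
    apply Finset.coe_subset.2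
    intro x hx
    exact Finset.mem_erase.2 ⟨fun h => hcC₂ (h ▸ hx), hC₂sub hx⟩

/-! ### Flags and matchings -/

lemma flagOf_cons (M : Matroid (Fin n)) (a : Fin n) (t : List (Fin n)) :
    flagOf M (a :: t) = M.closure ↑((a :: t).toFinset) :: flagOf M t := by
  unfold flagOf
  rw [List.tails_cons, List.map_cons]

lemma flagOf_length (M : Matroid (Fin n)) (l : List (Fin n)) :
    (flagOf M l).length = l.length + 1 := by
  simp [flagOf]

lemma match_length {M : Matroid (Fin n)} {l r : List (Fin n)}
    (h : flagOf M l = flagOf M r) : l.length = r.length := by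
  have := congrArg List.length h
  rw [flagOf_length, flagOf_length] at this
  omega

lemma flag_head_closure {M : Matroid (Fin n)} {l r : List (Fin n)}
    (h : flagOf M l = flagOf M r) :
    M.closure ↑l.toFinset = M.closure ↑r.toFinset := by
  cases l with
  | nil =>
    cases r with
    | nil => rfl
    | cons b s => exact absurd (match_length h) (by simp)
  | cons a t =>
    cases r with
    | nil => exact absurd (match_length h) (by simp)
    | cons b s =>
      rw [flagOf_cons, flagOf_cons] at h
      exact List.head_eq_of_cons_eq h

lemma flag_tail {M : Matroid (Fin n)} {a b : Fin n} {t s : List (Fin n)}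
    (h : flagOf M (a :: t) = flagOf M (b :: s)) : flagOf M t = flagOf M s := by
  rw [flagOf_cons, flagOf_cons] at h
  exact List.tail_eq_of_cons_eq h

lemma not_mem_closure_tail (M : Matroid (Fin n)) {b : Fin n} {s : List (Fin n)}
    (hnd : (b :: s).Nodup) (hind : M.Indep ↑((b :: s).toFinset)) :
    b ∉ M.closure ↑s.toFinset := by
  have hbs : b ∉ s := (List.nodup_cons.1 hnd).1
  have hsub : (↑s.toFinset : Set (Fin n)) ⊆ ↑((b :: s).toFinset) \ {b} := by
    intro x hx
    rw [Finset.mem_coe, List.mem_toFinset] at hx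
    refine ⟨by rw [Finset.mem_coe, List.mem_toFinset]; exact List.mem_cons_of_mem _ hx, ?_⟩
    exact fun h => hbs (h ▸ hx)
  intro hb
  exact hind.notMem_closure_diff_of_mem
    (by rw [Finset.mem_coe, List.mem_toFinset]; exact List.mem_cons_self)
    (mem_closure_mono hb hsub)

lemma closure_cons_of_mem (M : Matroid (Fin n)) {a : Fin n} {t : List (Fin n)}
    (h : a ∈ M.closure ↑t.toFinset) :
    M.closure ↑((a :: t).toFinset) = M.closure ↑t.toFinset := by
  rw [List.toFinset_cons, Finset.coe_insert, ← M.closure_insert_closure_eq_closure_insert,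
    Set.insert_eq_of_mem h, M.closure_closure]

lemma strict_chain_closure (M : Matroid (Fin n)) {b : Fin n} {s : List (Fin n)}
    (hnd : (b :: s).Nodup) (hind : M.Indep ↑((b :: s).toFinset)) :
    M.closure ↑((b :: s).toFinset) ≠ M.closure ↑s.toFinset := by
  intro h
  apply not_mem_closure_tail M hnd hind
  rw [← h]
  exact M.subset_closure _ hind.subset_ground
    (by rw [Finset.mem_coe, List.mem_toFinset]; exact List.mem_cons_self)

/-- a list whose flag matches the flag of an independent list spans an independent set -/
lemma match_indep (hE : M.E = Set.univ) :
    ∀ (l r : List (Fin n)), l.Nodup → r.Nodup → M.Indep ↑r.toFinset →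
      flagOf M l = flagOf M r → M.Indep ↑l.toFinset := by
  intro l
  induction l with
  | nil => intro r _ _ _ _; simp
  | cons a t ih =>
    intro r hlnd hrnd hrind hflag
    cases r with
    | nil => exact absurd (match_length hflag) (by simp)
    | cons b s =>
      have htnd : t.Nodup := (List.nodup_cons.1 hlnd).2
      have hsnd : s.Nodup := (List.nodup_cons.1 hrnd).2
      have hsind : M.Indep ↑s.toFinset := hrind.subset (by
        intro x hx
        rw [Finset.mem_coe, List.mem_toFinset] at hx ⊢
        exact List.mem_cons_of_mem _ hx)
      have htind : M.Indep ↑t.toFinset := ih s htnd hsnd hsind (flag_tail hflag)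
      have hhead := flag_head_closure hflag
      have htail := flag_head_closure (flag_tail hflag)
      have hna : a ∉ M.closure ↑t.toFinset := by
        intro ha
        apply strict_chain_closure M hrnd hrind
        rw [← hhead, closure_cons_of_mem M ha, htail]
      have hat : a ∉ t.toFinset := by
        intro h
        exact hna (M.subset_closure _ htind.subset_ground (by rwa [Finset.mem_coe]))
      rw [List.toFinset_cons, Finset.coe_insert]
      rw [htind.insert_indep_iff_of_notMem (by rwa [Finset.mem_coe])]
      exact ⟨by rw [hE]; trivial, hna⟩

/-- a matched list is determined by its underlying set -/
lemma match_unique (hE : M.E = Set.univ) :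
    ∀ (l₁ l₂ : List (Fin n)), l₁.Nodup → l₂.Nodup → M.Indep ↑l₁.toFinset →
      flagOf M l₁ = flagOf M l₂ → l₁.toFinset = l₂.toFinset → l₁ = l₂ := by
  intro l₁
  induction l₁ with
  | nil =>
    intro l₂ _ _ _ hflag _
    cases l₂ with
    | nil => rfl
    | cons b s => exact absurd (match_length hflag) (by simp)
  | cons a t ih =>
    intro l₂ h1nd h2nd h1ind hflag hset
    cases l₂ with
    | nil => exact absurd (match_length hflag) (by simp)
    | cons b s =>
      have htnd : t.Nodup := (List.nodup_cons.1 h1nd).2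
      have hsnd : s.Nodup := (List.nodup_cons.1 h2nd).2
      have htind : M.Indep ↑t.toFinset := h1ind.subset (by
        intro x hx
        rw [Finset.mem_coe, List.mem_toFinset] at hx ⊢
        exact List.mem_cons_of_mem _ hx)
      have htail := flag_head_closure (flag_tail hflag)
      have hna : a ∉ M.closure ↑t.toFinset := not_mem_closure_tail M h1nd h1ind
      have hab : a = b := by
        have hamem : a ∈ (b :: s).toFinset := by
          rw [← hset]; simp
        rw [List.toFinset_cons, Finset.mem_insert] at hamem
        rcases hamem with h | h
        · exact h
        · exfalso
          apply hna
          rw [htail]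
          exact M.subset_closure _ (subset_ground_univ hE _) (by rwa [Finset.mem_coe])
      subst hab
      have hts : t.toFinset = s.toFinset := by
        have h1 : t.toFinset = (a :: t).toFinset.erase a := by
          rw [List.toFinset_cons, Finset.erase_insert (by
            rw [List.mem_toFinset] at *; exact (List.nodup_cons.1 h1nd).1)]
        have h2 : s.toFinset = (a :: s).toFinset.erase a := by
          rw [List.toFinset_cons, Finset.erase_insert (by
            rw [List.mem_toFinset] at *; exact (List.nodup_cons.1 h2nd).1)]
        rw [h1, h2, hset]
      rw [ih s htnd hsnd htind (flag_tail hflag) hts]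

/-! ### The weight function -/

/-- `X` admits an ordering matching the flag of `r`. -/
def MS (M : Matroid (Fin n)) (r : List (Fin n)) (X : Finset (Fin n)) : Prop :=
  ∃ lj : List (Fin n), lj.Nodup ∧ lj.toFinset = X ∧ flagOf M lj = flagOf M r

open Classical in
/-- the weight `1/ochi χ (the matching order of X)`, or `0`. -/
noncomputable def mwt (M : Matroid (Fin n)) (χ : Finset (Fin n) → K)
    (r : List (Fin n)) (X : Finset (Fin n)) : K :=
  if h : MS M r X then (ochi χ h.choose)⁻¹ else 0

lemma mwt_eq_zero {M : Matroid (Fin n)} {χ : Finset (Fin n) → K} {r : List (Fin n)}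
    {X : Finset (Fin n)} (h : ¬ MS M r X) : mwt M χ r X = 0 := by
  rw [mwt, dif_neg h]

lemma MS_indep {M : Matroid (Fin n)} (hE : M.E = Set.univ) {r : List (Fin n)}
    (hrnd : r.Nodup) (hrind : M.Indep ↑r.toFinset) {X : Finset (Fin n)}
    (h : MS M r X) : M.Indep ↑X := by
  obtain ⟨l, hnd, hset, hflag⟩ := h
  rw [← hset]
  exact match_indep hE l r hnd hrnd hrind hflag

lemma mwt_eq {M : Matroid (Fin n)} (hE : M.E = Set.univ) {χ : Finset (Fin n) → K}
    {r : List (Fin n)} (hrnd : r.Nodup) (hrind : M.Indep ↑r.toFinset)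
    {X : Finset (Fin n)} {l : List (Fin n)} (hnd : l.Nodup) (hset : l.toFinset = X)
    (hflag : flagOf M l = flagOf M r) :
    mwt M χ r X = (ochi χ l)⁻¹ := by
  have h : MS M r X := ⟨l, hnd, hset, hflag⟩
  rw [mwt, dif_pos h]
  obtain ⟨hnd', hset', hflag'⟩ := h.choose_spec
  congr 1
  congr 1
  exact match_unique hE _ l hnd' hnd
    (by rw [hset']; rw [← hset] at *; exact match_indep hE l r hnd hrnd hrind hflag)
    (hflag'.trans hflag.symm) (hset'.trans hset.symm)

lemma MS_card {M : Matroid (Fin n)} {r : List (Fin n)} {X : Finset (Fin n)}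
    (h : MS M r X) : X.card = r.length := by
  obtain ⟨l, hnd, hset, hflag⟩ := h
  rw [← hset, List.card_toFinset, hnd.dedup, match_length hflag]

/-! ### listInv and ochi basics -/

lemma listInv_sorted {l : List (Fin n)} (hl : l.Pairwise (· ≤ ·)) : listInv l = 0 := by
  induction l with
  | nil => rfl
  | cons a t ih =>
    rw [listInv, ih hl.of_cons]
    have : t.countP (fun b => decide (b < a)) = 0 := by
      rw [List.countP_eq_zero]
      intro b hb
      simpa using not_lt.2 (List.rel_of_pairwise_cons hl hb)
    omega

lemma ochi_sort (χ : Finset (Fin n) → K) (X : Finset (Fin n)) :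
    ochi χ (X.sort (· ≤ ·)) = χ X := by
  rw [ochi, listInv_sorted (Finset.pairwise_sort _ _), pow_zero, one_mul, Finset.sort_toFinset]

lemma ochi_eq (χ : Finset (Fin n) → K) (l : List (Fin n)) :
    ochi χ l = (-1 : K) ^ listInv l * χ l.toFinset := rfl

/-! ### NBC rigidity -/

lemma NBC_subset {M : Matroid (Fin n)} {X Y : Finset (Fin n)} (h : NBCSet M X)
    (hYX : Y ⊆ X) : NBCSet M Y :=
  ⟨h.1.subset (Finset.coe_subset.2 hYX), fun B hB => h.2 B (hB.trans hYX)⟩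

lemma NBC_min (hE : M.E = Set.univ) {X : Finset (Fin n)} (hX : NBCSet M X)
    {a : Fin n} (ha : a ∈ M.closure ↑X) (hanl : M.Indep {a}) :
    ∃ x ∈ X, x ≤ a := by
  by_cases haX : a ∈ X
  · exact ⟨a, haX, le_rfl⟩
  by_contra hcon
  push_neg at hcon
  have hlt : ∀ x ∈ X, a < x := fun x hx => (hcon x hx)
  have hXind := hX.1
  have hdep : M.Dep (insert a ↑X) := by
    rw [dep_iff_not_indep hE]
    intro hind
    rw [hXind.insert_indep_iff_of_notMem (by rwa [Finset.mem_coe])] at hind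
    exact hind.2 ha
  have hins : (insert a ↑X : Set (Fin n)) = ↑(insert a X) := by simp
  rw [hins] at hdep
  obtain ⟨C, hCsub, hC⟩ := exists_circuit_subset hE hdep
  have haC : a ∈ C := by
    by_contra haC
    have : C ⊆ X := fun x hx => by
      rcases Finset.mem_insert.1 (hCsub hx) with rfl | h
      · exact absurd hx haC
      · exact h
    exact (dep_iff_not_indep hE).1 hC.1 (hXind.subset (Finset.coe_subset.2 this))
  have hCX : C.erase a ⊆ X := by
    intro x hx
    obtain ⟨hxa, hxC⟩ := Finset.mem_erase.1 hx
    rcases Finset.mem_insert.1 (hCsub hxC) with rfl | h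
    · exact absurd rfl hxa
    · exact h
  have hcard : 1 < C.card := by
    by_contra hle
    push_neg at hle
    interval_cases h : C.card
    · exact absurd (Finset.card_eq_zero.1 h ▸ haC) (Finset.notMem_empty a)
    · obtain ⟨x, hx⟩ := Finset.card_eq_one.1 h
      rw [hx, Finset.mem_singleton] at haC
      subst haC
      rw [hx] at hC
      have : M.Dep {a} := by
        have := hC.1
        simpa using this
      exact (dep_iff_not_indep hE).1 this hanl
  have hmin : ∀ b ∈ C, a ≤ b := by
    intro b hb
    rcases Finset.mem_insert.1 (hCsub hb) with rfl | h
    · exact le_rfl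
    · exact (hlt b h).le
  exact hX.2 (C.erase a) hCX ⟨C, a, hC, hcard, haC, hmin, rfl⟩

lemma NBC_rigid (hE : M.E = Set.univ) :
    ∀ (l r' : List (Fin n)), l.Nodup → r'.Pairwise (· < ·) → NBCSet M l.toFinset →
      NBCSet M r'.toFinset → flagOf M l = flagOf M r' → l.toFinset = r'.toFinset := by
  intro l
  induction l with
  | nil =>
    intro r' _ _ _ _ hflag
    cases r' with
    | nil => rfl
    | cons b s => exact absurd (match_length hflag) (by simp)
  | cons a t ih =>
    intro r' hlnd hrsort hlNBC hrNBC hflag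
    cases r' with
    | nil => exact absurd (match_length hflag) (by simp)
    | cons b s =>
      have htnd : t.Nodup := (List.nodup_cons.1 hlnd).2
      have hssort : s.Pairwise (· < ·) := hrsort.of_cons
      have htsub : t.toFinset ⊆ (a :: t).toFinset := by
        intro x hx; rw [List.mem_toFinset] at *; simp [List.mem_cons_of_mem _ hx]
      have hssub : s.toFinset ⊆ (b :: s).toFinset := by
        intro x hx; rw [List.mem_toFinset] at *; simp [List.mem_cons_of_mem _ hx]
      have hts := ih s htnd hssort (NBC_subset hlNBC htsub) (NBC_subset hrNBC hssub)
        (flag_tail hflag)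
      have hhead := flag_head_closure hflag
      -- a = b
      have hamem : a ∈ M.closure ↑((b :: s).toFinset) := by
        rw [← hhead]
        exact M.subset_closure _ (subset_ground_univ hE _)
          (by rw [Finset.mem_coe, List.mem_toFinset]; exact List.mem_cons_self)
      have hbmem : b ∈ M.closure ↑((a :: t).toFinset) := by
        rw [hhead]
        exact M.subset_closure _ (subset_ground_univ hE _)
          (by rw [Finset.mem_coe, List.mem_toFinset]; exact List.mem_cons_self)
      have haind : M.Indep {a} := hlNBC.1.subset (by
        intro x hx
        rw [Set.mem_singleton_iff] at hx
        subst hx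
        rw [Finset.mem_coe, List.mem_toFinset]
        exact List.mem_cons_self)
      have hbind : M.Indep {b} := hrNBC.1.subset (by
        intro x hx
        rw [Set.mem_singleton_iff] at hx
        subst hx
        rw [Finset.mem_coe, List.mem_toFinset]
        exact List.mem_cons_self)
      have hba : b ≤ a := by
        obtain ⟨x, hx, hxa⟩ := NBC_min hE hrNBC hamem haind
        rw [List.mem_toFinset, List.mem_cons] at hx
        rcases hx with rfl | hx
        · exact hxa
        · exact ((List.rel_of_pairwise_cons hrsort hx).le).trans hxa
      have hab : a = b := by
        obtain ⟨y, hy, hyb⟩ := NBC_min hE hlNBC hbmem hbind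
        rw [List.mem_toFinset, List.mem_cons] at hy
        rcases hy with rfl | hy
        · exact le_antisymm hyb hba
        · exfalso
          rw [← List.mem_toFinset, hts, List.mem_toFinset] at hy
          exact absurd hyb (not_le.2 (List.rel_of_pairwise_cons hrsort hy))
      rw [List.toFinset_cons, List.toFinset_cons, hab, hts]

/-! ### list and parity lemmas -/

lemma listInv_cons (a : Fin n) (t : List (Fin n)) :
    listInv (a :: t) = (t.countP fun b => decide (b < a)) + listInv t := rfl

lemma listInv_middle (A B : List (Fin n)) (x : Fin n) :
    listInv (A ++ x :: B) = listInv (A ++ B)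
      + (B.countP fun b => decide (b < x)) + (A.countP fun a => decide (x < a)) := by
  induction A with
  | nil => simp [listInv_cons]; omega
  | cons a A' ih =>
    rw [List.cons_append, listInv_cons, ih, List.cons_append, listInv_cons]
    rw [List.countP_append, List.countP_cons, List.countP_append, List.countP_cons]
    omega

lemma countP_lt_gt (A : List (Fin n)) (x : Fin n) (hx : x ∉ A) :
    (A.countP fun b => decide (b < x)) + (A.countP fun b => decide (x < b)) = A.length := by
  induction A with
  | nil => simp
  | cons a A' ih =>
    have hax : a ≠ x := fun h => hx (h ▸ List.mem_cons_self)
    have hx' : x ∉ A' := fun h => hx (List.mem_cons_of_mem _ h)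
    rw [List.countP_cons, List.countP_cons, List.length_cons]
    have ihh := ih hx'
    rcases lt_trichotomy a x with h | h | h
    · rw [if_pos (by simpa using h), if_neg (by simpa using not_lt.2 h.le)]
      omega
    · exact absurd h hax
    · rw [if_neg (by simpa using not_lt.2 h.le), if_pos (by simpa using h)]
      omega

/-- the main parity computation -/
lemma parity_main {A B : List (Fin n)} {u w : Fin n} {s : List (Fin n)}
    (hnd : (u :: (A ++ w :: B)).Nodup)
    (hperm : s.Perm (u :: (A ++ w :: B))) :
    Odd ((s.countP fun v => decide (v < u)) + 1 + listInv (A ++ u :: B)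
      + ((s.countP fun v => decide (v < w)) + 1 + listInv (A ++ w :: B))) := by
  have huw : u ≠ w := by
    intro h
    subst h
    exact (List.nodup_cons.1 hnd).1 (by simp)
  have huA : u ∉ A := fun h => (List.nodup_cons.1 hnd).1 (by simp [h])
  have huB : u ∉ B := fun h => (List.nodup_cons.1 hnd).1 (by simp [h])
  have hndl : (A ++ w :: B).Nodup := (List.nodup_cons.1 hnd).2
  have hwA : w ∉ A := by
    intro h
    have := List.disjoint_of_nodup_append hndl
    exact this h (List.mem_cons_self)
  have hcnt : ∀ x : Fin n, s.countP (fun v => decide (v < x))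
      = (if u < x then 1 else 0) + (A.countP fun v => decide (v < x))
        + (if w < x then 1 else 0) + (B.countP fun v => decide (v < x)) := by
    intro x
    rw [hperm.countP_eq, List.countP_cons, List.countP_append, List.countP_cons]
    simp only [decide_eq_true_eq]
    omega
  rw [hcnt u, hcnt w, listInv_middle, listInv_middle]
  simp only [if_neg (lt_irrefl u), if_neg (lt_irrefl w), decide_eq_true_eq]
  have h1 : (if u < w then 1 else 0) + (if w < u then 1 else 0) = 1 := by
    rcases lt_trichotomy u w with h | h | h
    · simp [h, not_lt.2 h.le]
    · exact absurd h huw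
    · simp [h, not_lt.2 h.le]
  have h2 := countP_lt_gt A u huA
  have h3 := countP_lt_gt A w hwA
  rw [Nat.odd_iff]
  omega

lemma neg_one_pow_cancel {m k : ℕ} (h : Odd (m + k)) : (-1 : K) ^ m + (-1 : K) ^ k = 0 := by
  have : (-1 : K) ^ m * (-1 : K) ^ k = -1 := by
    rw [← pow_add, h.neg_one_pow]
  have hk : (-1 : K) ^ k * (-1 : K) ^ k = 1 := by
    rw [← pow_add, Even.neg_one_pow ⟨k, rfl⟩]
  have hm : (-1 : K) ^ m = -((-1 : K) ^ k) := by
    calc (-1 : K) ^ m = (-1 : K) ^ m * ((-1:K)^k * (-1:K)^k) := by rw [hk, mul_one]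
    _ = ((-1 : K) ^ m * (-1:K)^k) * (-1:K)^k := by ring
    _ = -((-1:K)^k) := by rw [this]; ring
  rw [hm]
  ring

/-- position in a sorted list equals the count of smaller elements -/
lemma sorted_get_countP : ∀ (s : List (Fin n)), s.Pairwise (· < ·) → ∀ (p : Fin s.length),
    (p : ℕ) = s.countP (fun v => decide (v < s.get p)) := by
  intro s
  induction s with
  | nil => intro _ p; exact absurd p.2 (by simp)
  | cons a t ih =>
    intro hs p
    rcases Fin.eq_zero_or_eq_succ p with rfl | ⟨q, rfl⟩
    · simp only [List.get, Fin.val_zero]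
      rw [List.countP_cons]
      have h0 : t.countP (fun v => decide (v < a)) = 0 := by
        rw [List.countP_eq_zero]
        intro b hb
        simpa using not_lt.2 (List.rel_of_pairwise_cons hs hb).le
      simp [h0]
      exact h0.symm
    · have hq : (q : ℕ) = t.countP (fun v => decide (v < t.get q)) := ih hs.of_cons q
      simp only [List.get, Fin.val_succ]
      rw [List.countP_cons]
      have hmem : t.get q ∈ t := List.get_mem t q
      have hlt : a < t.get q := List.rel_of_pairwise_cons hs hmem
      rw [if_pos (by simpa using hlt)]
      show (q : ℕ) + 1 = List.countP (fun v => decide (v < t.get q)) t + 1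
      omega

lemma enumFrom_map_sum {α : Type*} {G : Type*} [AddCommMonoid G] :
    ∀ (l : List α) (k : ℕ) (g : α × ℕ → G),
      ((l.zipIdx k).map g).sum = ∑ i : Fin l.length, g (l.get i, k + i) := by
  intro l
  induction l with
  | nil => intro k g; simp
  | cons a t ih =>
    intro k g
    rw [List.zipIdx_cons, List.map_cons, List.sum_cons, ih]
    have : ∑ i : Fin (a :: t).length, g ((a :: t).get i, k + ↑i)
        = g (a, k) + ∑ i : Fin t.length, g (t.get i, k + (↑i + 1)) := by
      show ∑ i : Fin (t.length + 1), (fun j : Fin (t.length+1) => g ((a :: t).get j, k + ↑j)) i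
        = _
      rw [Fin.sum_univ_succ]
      simp
    rw [this]
    congr 1
    apply Finset.sum_congr rfl
    intro i _
    have he : k + 1 + (i : ℕ) = k + ((i : ℕ) + 1) := by omega
    rw [he]

/-- the sum of a mapped enumeration as a `Fin` sum -/
lemma enum_map_sum {α : Type*} {G : Type*} [AddCommMonoid G] (l : List α) (g : α × ℕ → G) :
    (l.zipIdx.map g).sum = ∑ i : Fin l.length, g (l.get i, i) := by
  rw [enumFrom_map_sum]
  simp

/-! ### drop-closure lemmas -/

lemma flag_drop {M : Matroid (Fin n)} :
    ∀ (l l' : List (Fin n)), flagOf M l = flagOf M l' → ∀ k,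
      M.closure ↑((l.drop k).toFinset) = M.closure ↑((l'.drop k).toFinset) := by
  intro l
  induction l with
  | nil =>
    intro l' h k
    cases l' with
    | nil => rfl
    | cons b s => exact absurd (match_length h) (by simp)
  | cons a t ih =>
    intro l' h k
    cases l' with
    | nil => exact absurd (match_length h) (by simp)
    | cons b s =>
      cases k with
      | zero => exact flag_head_closure h
      | succ k => exact ih s (flag_tail h) k

lemma flag_of_drops {M : Matroid (Fin n)} :
    ∀ (l l' : List (Fin n)), l.length = l'.length →
      (∀ k, M.closure ↑((l.drop k).toFinset) = M.closure ↑((l'.drop k).toFinset)) →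
      flagOf M l = flagOf M l' := by
  intro l
  induction l with
  | nil =>
    intro l' hlen _
    cases l' with
    | nil => rfl
    | cons b s => simp at hlen
  | cons a t ih =>
    intro l' hlen hdrop
    cases l' with
    | nil => simp at hlen
    | cons b s =>
      rw [flagOf_cons, flagOf_cons]
      congr 1
      · exact hdrop 0
      · exact ih s (by simpa using hlen) (fun k => hdrop (k + 1))

lemma drop_toFinset_anti (l : List (Fin n)) {j k : ℕ} (h : j ≤ k) :
    (l.drop k).toFinset ⊆ (l.drop j).toFinset := by
  intro x hx
  rw [List.mem_toFinset] at hx ⊢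
  have : l.drop k = (l.drop j).drop (k - j) := by
    rw [List.drop_drop]
    congr 1
    omega
  rw [this] at hx
  exact (List.drop_subset _ _) hx

/-- elements of a matched independent list transition at their own position -/
lemma get_transition {M : Matroid (Fin n)} {l : List (Fin n)} (hnd : l.Nodup)
    (hind : M.Indep ↑l.toFinset) {p : ℕ} (hp : p < l.length) :
    l.get ⟨p, hp⟩ ∈ M.closure ↑((l.drop p).toFinset) ∧
      l.get ⟨p, hp⟩ ∉ M.closure ↑((l.drop (p+1)).toFinset) := by
  have hdecomp : l.drop p = l.get ⟨p, hp⟩ :: l.drop (p + 1) := by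
    rw [List.drop_eq_getElem_cons hp]
    rfl
  constructor
  · apply M.subset_closure _ (hind.subset ((Finset.coe_subset.2 (by
      intro x hx
      rw [List.mem_toFinset] at hx ⊢
      exact (List.drop_subset _ _) hx)))).subset_ground
    rw [Finset.mem_coe, List.mem_toFinset, hdecomp]
    exact List.mem_cons_self
  · have hsub : (↑((l.drop (p+1)).toFinset) : Set (Fin n)) ⊆ ↑l.toFinset \ {l.get ⟨p, hp⟩} := by
      intro x hx
      rw [Finset.mem_coe, List.mem_toFinset] at hx
      constructor
      · rw [Finset.mem_coe, List.mem_toFinset]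
        exact (List.drop_subset _ _) hx
      · intro hxe
        rw [Set.mem_singleton_iff] at hxe
        subst hxe
        -- l.get p appears in drop (p+1), contradicting nodup
        have h2 : l.drop p = l.get ⟨p, hp⟩ :: l.drop (p+1) := hdecomp
        have h3 : (l.drop p).Nodup := hnd.sublist (List.drop_sublist _ _)
        rw [h2, List.nodup_cons] at h3
        exact h3.1 hx
    intro hmem
    exact hind.notMem_closure_diff_of_mem
      (by rw [Finset.mem_coe, List.mem_toFinset]; exact List.get_mem l ⟨p, hp⟩)
      (mem_closure_mono hmem hsub)

/-- the transition position is unique along equal flags -/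
lemma transition_unique {M : Matroid (Fin n)} {l l' : List (Fin n)}
    (hflag : flagOf M l = flagOf M l') {e : Fin n} {p q : ℕ}
    (hp1 : e ∈ M.closure ↑((l.drop p).toFinset)) (hp2 : e ∉ M.closure ↑((l.drop (p+1)).toFinset))
    (hq1 : e ∈ M.closure ↑((l'.drop q).toFinset))
    (hq2 : e ∉ M.closure ↑((l'.drop (q+1)).toFinset)) : p = q := by
  by_contra hne
  rcases Nat.lt_or_ge p q with h | h
  · -- p < q : q ≥ p+1, e ∈ cl(drop q l') = cl(drop q l) ⊆ cl(drop (p+1) l)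
    apply hp2
    have := flag_drop l' l hflag.symm q
    rw [this] at hq1
    exact mem_closure_mono hq1 (Finset.coe_subset.2 (drop_toFinset_anti l h))
  · have hlt : q < p := lt_of_le_of_ne h (Ne.symm hne)
    apply hq2
    have heq := flag_drop l l' hflag p
    rw [heq] at hp1
    exact mem_closure_mono hp1 (Finset.coe_subset.2 (drop_toFinset_anti l' hlt))

/-! ### The pairing construction -/

lemma singleton_indep_of_unidep (hE : M.E = Set.univ) {U C : Finset (Fin n)}
    (hU : Unidep M U) (hCU : C ⊆ U) (hC : IsCircuit M C) (hCcard : 1 < C.card)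
    {u : Fin n} (hu : u ∈ U) : M.Indep {u} := by
  by_contra h
  have hdep : M.Dep ({u} : Set (Fin n)) := (dep_iff_not_indep hE).2 h
  have hcirc : IsCircuit M {u} := by
    refine ⟨by simpa using hdep, ?_⟩
    intro D hD
    have : D = ∅ := by
      rw [Finset.ssubset_singleton_iff] at hD
      exact hD
    subst this
    rw [dep_iff_not_indep hE]
    simp [M.empty_indep]
  obtain ⟨Cu, hCu, huniq⟩ := hU.2
  have h1 : ({u} : Finset (Fin n)) = Cu := huniq _ ⟨by simpa using hu, hcirc⟩
  have h2 : C = Cu := huniq _ ⟨hCU, hC⟩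
  rw [← h2] at h1
  rw [← h1] at hCcard
  simp at hCcard

lemma closure_le_closure (hE : M.E = Set.univ) {S T : Set (Fin n)}
    (h : S ⊆ M.closure T) : M.closure S ⊆ M.closure T := by
  have h2 := M.closure_subset_closure (X := S) (Y := M.closure T) h
  rwa [M.closure_closure] at h2

lemma not_mem_closure_empty (hE : M.E = Set.univ) {u : Fin n} (h : M.Indep {u}) :
    u ∉ M.closure (∅ : Set (Fin n)) := by
  intro hmem
  have h2 := M.empty_indep.insert_indep_iff_of_notMem (Set.notMem_empty u)
  have h3 : M.Indep (insert u (∅ : Set (Fin n))) := by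
    rw [show (insert u (∅ : Set (Fin n))) = {u} by simp]
    exact h
  rw [h2] at h3
  exact h3.2 hmem

lemma pairing (hE : M.E = Set.univ) {U C : Finset (Fin n)}
    (hU : Unidep M U) (hCU : C ⊆ U) (hC : IsCircuit M C) (hCcard : 1 < C.card)
    {r : List (Fin n)} (hrnd : r.Nodup) (hrind : M.Indep ↑r.toFinset)
    {u₁ : Fin n} (hu₁ : u₁ ∈ U) {l₁ : List (Fin n)} (h₁nd : l₁.Nodup)
    (h₁set : l₁.toFinset = U.erase u₁) (h₁flag : flagOf M l₁ = flagOf M r) :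
    ∃ (w : Fin n) (l₂ A B : List (Fin n)),
      w ∈ U ∧ w ≠ u₁ ∧ l₁ = A ++ w :: B ∧ l₂ = A ++ u₁ :: B ∧ l₂.Nodup ∧
      l₂.toFinset = U.erase w ∧ flagOf M l₂ = flagOf M r ∧
      (∀ u ∈ U, MS M r (U.erase u) → u = u₁ ∨ u = w) := by
  classical
  have h₁ind : M.Indep ↑l₁.toFinset := match_indep hE l₁ r h₁nd hrnd hrind h₁flag
  have hU1ind : M.Indep ↑(U.erase u₁) := by rwa [h₁set] at h₁ind
  have hu₁C : u₁ ∈ C := (unidep_erase_indep_iff hE hU hCU hC).1 hU1ind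
  have hu₁ind : M.Indep {u₁} := singleton_indep_of_unidep hE hU hCU hC hCcard hu₁
  -- the transition predicate
  set P : ℕ → Prop := fun k => u₁ ∈ M.closure ↑((l₁.drop k).toFinset) with hPdef
  have hP0 : P 0 := by
    show u₁ ∈ M.closure ↑((l₁.drop 0).toFinset)
    rw [List.drop_zero, h₁set]
    apply mem_closure_mono (circuit_mem_closure_erase hE hC hu₁C)
    apply Finset.coe_subset.2
    exact fun x hx => Finset.mem_erase.2
      ⟨(Finset.mem_erase.1 hx).1, hCU (Finset.mem_erase.1 hx).2⟩
  have hPlen : ¬ P l₁.length := by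
    show ¬ u₁ ∈ M.closure ↑((l₁.drop l₁.length).toFinset)
    rw [List.drop_length]
    simpa using not_mem_closure_empty hE hu₁ind
  have hkP : P (Nat.findGreatest P l₁.length) := Nat.findGreatest_spec (Nat.zero_le _) hP0
  set k : ℕ := Nat.findGreatest P l₁.length with hkdef
  have hkle : k ≤ l₁.length := Nat.findGreatest_le _
  have hklt : k < l₁.length := lt_of_le_of_ne hkle (fun h => hPlen (h ▸ hkP))
  have hknot : ¬ P (k + 1) :=
    Nat.findGreatest_is_greatest (Nat.lt_succ_self k) (by omega)
  set w : Fin n := l₁.get ⟨k, hklt⟩ with hwdef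
  set A : List (Fin n) := l₁.take k with hAdef
  set B : List (Fin n) := l₁.drop (k + 1) with hBdef
  have hdropk : l₁.drop k = w :: B := by
    rw [hBdef, hwdef, List.drop_eq_getElem_cons hklt]
    rfl
  have hdecomp : l₁ = A ++ w :: B := by
    rw [hAdef, ← hdropk, List.take_append_drop]
  have hwl₁ : w ∈ l₁.toFinset := List.mem_toFinset.2 (List.get_mem _ _)
  have hwU : w ∈ U := (Finset.mem_erase.1 (h₁set ▸ hwl₁)).2
  have hwne : w ≠ u₁ := (Finset.mem_erase.1 (h₁set ▸ hwl₁)).1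
  have hu₁l₁ : u₁ ∉ l₁ := fun h =>
    (Finset.mem_erase.1 (h₁set ▸ List.mem_toFinset.2 h)).1 rfl
  have hABnd : (w :: (A ++ B)).Nodup := by
    rw [← List.nodup_middle, ← hdecomp]
    exact h₁nd
  have hwAB : w ∉ A ++ B := (List.nodup_cons.1 hABnd).1
  have hu₁AB : u₁ ∉ A ++ B := by
    intro hmem
    apply hu₁l₁
    rw [hdecomp]
    rcases List.mem_append.1 hmem with h | h
    · exact List.mem_append_left _ h
    · exact List.mem_append_right _ (List.mem_cons_of_mem _ h)
  have hl₂nd : (A ++ u₁ :: B).Nodup := by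
    rw [List.nodup_middle, List.nodup_cons]
    exact ⟨hu₁AB, (List.nodup_cons.1 hABnd).2⟩
  have hl₂set : (A ++ u₁ :: B).toFinset = U.erase w := by
    ext x
    rw [List.mem_toFinset, Finset.mem_erase, List.mem_append, List.mem_cons]
    have hxl₁ : x ∈ A ∨ x = w ∨ x ∈ B ↔ x ≠ u₁ ∧ x ∈ U := by
      have h0 : x ∈ l₁.toFinset ↔ x ≠ u₁ ∧ x ∈ U := by rw [h₁set, Finset.mem_erase]
      rw [List.mem_toFinset, hdecomp, List.mem_append, List.mem_cons] at h0
      exact h0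
    have hwA : w ∉ A := fun h => hwAB (List.mem_append_left _ h)
    have hwB : w ∉ B := fun h => hwAB (List.mem_append_right _ h)
    have hu₁A : u₁ ∉ A := fun h => hu₁AB (List.mem_append_left _ h)
    have hu₁B : u₁ ∉ B := fun h => hu₁AB (List.mem_append_right _ h)
    by_cases hxu : x = u₁
    · subst hxu
      constructor
      · intro _; exact ⟨Ne.symm hwne, hu₁⟩
      · intro _; right; left; rfl
    · by_cases hxw : x = w
      · subst hxw
        constructor
        · intro hm
          rcases hm with h | h | h
          · exact absurd h hwA
          · exact absurd h (fun hh => hxu hh)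
          · exact absurd h hwB
        · intro hm
          exact absurd rfl hm.1
      · constructor
        · intro hm
          have hx1 : x ∈ A ∨ x = w ∨ x ∈ B := by tauto
          exact ⟨hxw, (hxl₁.1 hx1).2⟩
        · intro hm
          have := hxl₁.2 ⟨hxu, hm.2⟩
          tauto
  -- flag equality
  have hlen₂ : (A ++ u₁ :: B).length = l₁.length := by
    rw [hdecomp]
    simp
  have hAlen : A.length = k := by
    rw [hAdef, List.length_take]
    omega
  have key0 : M.closure ↑((u₁ :: B).toFinset) = M.closure ↑((w :: B).toFinset) := by
    have hT : (↑((w :: B).toFinset) : Set (Fin n))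
        = insert w ↑(B.toFinset) := by simp
    have hT2 : (↑((u₁ :: B).toFinset) : Set (Fin n))
        = insert u₁ ↑(B.toFinset) := by simp
    have hu₁mem : u₁ ∈ M.closure (insert w ↑(B.toFinset)) := by
      have h5 : u₁ ∈ M.closure ↑((l₁.drop k).toFinset) := hkP
      rw [hdropk] at h5
      rwa [hT] at h5
    have hu₁not : u₁ ∉ M.closure ↑(B.toFinset) := by
      have h5 : ¬ u₁ ∈ M.closure ↑((l₁.drop (k+1)).toFinset) := hknot
      rwa [← hBdef] at h5
    have hex := Matroid.closure_exchange (M := M) ⟨hu₁mem, hu₁not⟩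
    rw [hT, hT2]
    apply subset_antisymm
    · apply closure_le_closure hE
      intro x hx
      rcases Set.mem_insert_iff.1 hx with rfl | hx
      · exact hu₁mem
      · exact M.subset_closure _ (subset_ground_univ hE _) (Set.mem_insert_of_mem _ hx)
    · apply closure_le_closure hE
      intro x hx
      rcases Set.mem_insert_iff.1 hx with rfl | hx
      · exact hex.1
      · exact M.subset_closure _ (subset_ground_univ hE _) (Set.mem_insert_of_mem _ hx)
  have hl₂flag : flagOf M (A ++ u₁ :: B) = flagOf M l₁ := by
    apply flag_of_drops _ _ hlen₂
    intro j
    rcases Nat.lt_or_ge j (k+1) with hj | hj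
    · have hd₂ : (A ++ u₁ :: B).drop j = A.drop j ++ u₁ :: B := by
        rw [List.drop_append_of_le_length (by omega)]
      have hd₁ : l₁.drop j = A.drop j ++ w :: B := by
        rw [hdecomp, List.drop_append_of_le_length (by omega)]
      rw [hd₂, hd₁, List.toFinset_append, List.toFinset_append,
        Finset.coe_union, Finset.coe_union,
        ← M.closure_union_closure_right_eq, key0, M.closure_union_closure_right_eq]
    · have hd₂ : (A ++ u₁ :: B).drop j = B.drop (j - (k+1)) := by
        rw [show j = A.length + (j - A.length) by omega, List.drop_length_add_append]
        rw [show j - A.length = (j - A.length - 1) + 1 by omega]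
        rw [List.drop_succ_cons]
        congr 1
        omega
      have hd₁ : l₁.drop j = B.drop (j - (k+1)) := by
        rw [hdecomp, show j = A.length + (j - A.length) by omega, List.drop_length_add_append]
        rw [show j - A.length = (j - A.length - 1) + 1 by omega]
        rw [List.drop_succ_cons]
        congr 1
        omega
      rw [hd₂, hd₁]
  refine ⟨w, A ++ u₁ :: B, A, B, hwU, hwne, hdecomp, rfl, hl₂nd, hl₂set,
    hl₂flag.trans h₁flag, ?_⟩
  -- uniqueness of survivors
  intro u huU hMS
  by_contra hcon
  push_neg at hcon
  obtain ⟨hu_ne₁, hu_new⟩ := hcon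
  obtain ⟨l, hlnd, hlset, hlflag⟩ := hMS
  have hlind : M.Indep ↑l.toFinset := match_indep hE l r hlnd hrnd hrind hlflag
  have hl_l₁flag : flagOf M l = flagOf M l₁ := hlflag.trans h₁flag.symm
  have hu₁l : u₁ ∈ l := by
    rw [← List.mem_toFinset, hlset, Finset.mem_erase]
    exact ⟨Ne.symm hu_ne₁, hu₁⟩
  have hwl : w ∈ l := by
    rw [← List.mem_toFinset, hlset, Finset.mem_erase]
    exact ⟨Ne.symm hu_new, hwU⟩
  obtain ⟨p₁, hp₁⟩ := List.mem_iff_get.1 hu₁l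
  obtain ⟨p₂, hp₂⟩ := List.mem_iff_get.1 hwl
  have ht₁ := get_transition hlnd hlind p₁.2
  have ht₂ := get_transition hlnd hlind p₂.2
  rw [hp₁] at ht₁
  rw [hp₂] at ht₂
  have htu₁ : u₁ ∈ M.closure ↑((l₁.drop k).toFinset) ∧
      u₁ ∉ M.closure ↑((l₁.drop (k+1)).toFinset) := ⟨hkP, hknot⟩
  have htw := get_transition h₁nd h₁ind hklt
  have he₁ : (p₁ : ℕ) = k :=
    transition_unique hl_l₁flag ht₁.1 ht₁.2 htu₁.1 htu₁.2
  have he₂ : (p₂ : ℕ) = k :=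
    transition_unique hl_l₁flag ht₂.1 ht₂.2 htw.1 htw.2
  have hpp : p₁ = p₂ := Fin.ext (he₁.trans he₂.symm)
  rw [hpp, hp₂] at hp₁
  exact hwne hp₁

/-! ### The functional -/

variable (β : Fin n → Fin n → K)

noncomputable def Ffun (M : Matroid (Fin n)) (χ : Finset (Fin n) → K) (r : List (Fin n)) :
    EAlg n K β →ₗ[K] K :=
  (Finsupp.linearCombination K (mwt M χ r)).comp (Phi β)

lemma Ffun_eset (M : Matroid (Fin n)) (χ : Finset (Fin n) → K) (r : List (Fin n))
    (X : Finset (Fin n)) : Ffun β M χ r (eset β X) = mwt M χ r X := by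
  rw [Ffun, LinearMap.comp_apply, Phi_eset, Finsupp.linearCombination_single, one_smul]

lemma end_list_sum_apply {V : Type*} [AddCommGroup V] [Module K V] :
    ∀ (L : List (Module.End K V)) (v : V), L.sum v = (L.map (fun e => e v)).sum := by
  intro L
  induction L with
  | nil => intro v; simp
  | cons e S ih =>
    intro v
    rw [List.sum_cons, List.map_cons, List.sum_cons, LinearMap.add_apply, ih]

lemma Ffun_bdry (M : Matroid (Fin n)) (χ : Finset (Fin n) → K) (r : List (Fin n))
    (X : Finset (Fin n)) :
    Ffun β M χ r (bdry β χ X) =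
      ∑ i : Fin (X.sort (· ≤ ·)).length,
        (-1 : K) ^ ((i : ℕ) + 1) * χ (X.erase ((X.sort (· ≤ ·)).get i))
          * mwt M χ r (X.erase ((X.sort (· ≤ ·)).get i)) := by
  rw [bdry, map_list_sum, List.map_map, enum_map_sum]
  apply Finset.sum_congr rfl
  intro i _
  show Ffun β M χ r (((-1:K) ^ ((i:ℕ) + 1) * χ (X.erase _)) • eset β (X.erase _)) = _
  rw [map_smul, Ffun_eset, smul_eq_mul, mul_assoc]

lemma neg_one_pow_inv (m : ℕ) : ((-1 : K) ^ m)⁻¹ = (-1 : K) ^ m := by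
  apply inv_eq_of_mul_eq_one_right
  rw [← pow_add]
  exact Even.neg_one_pow ⟨m, rfl⟩

/-- vanishing of the functional on boundaries of unidependent sets -/
lemma Ffun_bdry_unidep (M : Matroid (Fin n)) (hE : M.E = Set.univ)
    (χ : Finset (Fin n) → K) (h1 : UC1 M χ) (r : List (Fin n)) (hrnd : r.Nodup)
    (hrind : M.Indep ↑r.toFinset) {U C : Finset (Fin n)} (hU : Unidep M U)
    (hCU : C ⊆ U) (hC : IsCircuit M C) (hCcard : 1 < C.card) :
    Ffun β M χ r (bdry β χ U) = 0 := by
  classical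
  rw [Ffun_bdry]
  set s : List (Fin n) := U.sort (· ≤ ·) with hsdef
  have hsnd : s.Nodup := U.sort_nodup _
  have hmemU : ∀ i : Fin s.length, s.get i ∈ U := by
    intro i
    have := List.get_mem s i
    rwa [← Finset.mem_sort (α := Fin n) (· ≤ ·)]
  by_cases hsurv : ∃ u ∈ U, MS M r (U.erase u)
  · obtain ⟨u₁, hu₁U, hMS₁⟩ := hsurv
    obtain ⟨l₁, h₁nd, h₁set, h₁flag⟩ := hMS₁
    obtain ⟨w, l₂, A, B, hwU, hwne, hdec1, hdec2, h₂nd, h₂set, h₂flag, huniq⟩ :=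
      pairing hE hU hCU hC hCcard hrnd hrind hu₁U h₁nd h₁set h₁flag
    have hu₁s : u₁ ∈ s := (Finset.mem_sort (α := Fin n) (· ≤ ·)).2 hu₁U
    have hws : w ∈ s := (Finset.mem_sort (α := Fin n) (· ≤ ·)).2 hwU
    obtain ⟨i₁, hi₁⟩ := List.mem_iff_get.1 hu₁s
    obtain ⟨i₂, hi₂⟩ := List.mem_iff_get.1 hws
    have hne12 : i₁ ≠ i₂ := by
      intro h
      rw [h, hi₂] at hi₁
      exact hwne hi₁
    have hterm0 : ∀ i : Fin s.length, i ≠ i₁ → i ≠ i₂ →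
        (-1 : K) ^ ((i : ℕ) + 1) * χ (U.erase (s.get i)) * mwt M χ r (U.erase (s.get i))
          = 0 := by
      intro i hi1 hi2
      have hMS : ¬ MS M r (U.erase (s.get i)) := by
        intro hMS
        rcases huniq (s.get i) (hmemU i) hMS with h | h
        · rw [← hi₁] at h
          exact hi1 (hsnd.get_inj_iff.1 h)
        · rw [← hi₂] at h
          exact hi2 (hsnd.get_inj_iff.1 h)
      rw [mwt_eq_zero hMS, mul_zero]
    have hsum2 : ∑ i : Fin s.length,
        (-1 : K) ^ ((i : ℕ) + 1) * χ (U.erase (s.get i)) * mwt M χ r (U.erase (s.get i))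
        = ∑ i ∈ ({i₁, i₂} : Finset (Fin s.length)),
          (-1 : K) ^ ((i : ℕ) + 1) * χ (U.erase (s.get i)) * mwt M χ r (U.erase (s.get i)) := by
      symm
      apply Finset.sum_subset (Finset.subset_univ _)
      intro i _ hi
      rw [Finset.mem_insert, Finset.mem_singleton] at hi
      push_neg at hi
      exact hterm0 i hi.1 hi.2
    rw [hsum2, Finset.sum_pair hne12, hi₁, hi₂]
    -- evaluate the two surviving terms
    have hind₁ : M.Indep ↑(U.erase u₁) :=
      MS_indep hE hrnd hrind ⟨l₁, h₁nd, h₁set, h₁flag⟩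
    have hind₂ : M.Indep ↑(U.erase w) :=
      MS_indep hE hrnd hrind ⟨l₂, h₂nd, h₂set, h₂flag⟩
    have hχ₁ : χ (U.erase u₁) ≠ 0 := (h1 _).2 hind₁
    have hχ₂ : χ (U.erase w) ≠ 0 := (h1 _).2 hind₂
    have hmwt₁ : mwt M χ r (U.erase u₁) = (ochi χ l₁)⁻¹ :=
      mwt_eq hE hrnd hrind h₁nd h₁set h₁flag
    have hmwt₂ : mwt M χ r (U.erase w) = (ochi χ l₂)⁻¹ :=
      mwt_eq hE hrnd hrind h₂nd h₂set h₂flag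
    have hochi₁ : ochi χ l₁ = (-1 : K) ^ listInv l₁ * χ (U.erase u₁) := by
      rw [ochi_eq, h₁set]
    have hochi₂ : ochi χ l₂ = (-1 : K) ^ listInv l₂ * χ (U.erase w) := by
      rw [ochi_eq, h₂set]
    have hval₁ : (-1 : K) ^ ((i₁ : ℕ) + 1) * χ (U.erase u₁) * mwt M χ r (U.erase u₁)
        = (-1 : K) ^ ((i₁ : ℕ) + 1 + listInv l₁) := by
      rw [hmwt₁, hochi₁, mul_inv, neg_one_pow_inv, pow_add]
      field_simp
      ring
    have hval₂ : (-1 : K) ^ ((i₂ : ℕ) + 1) * χ (U.erase w) * mwt M χ r (U.erase w)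
        = (-1 : K) ^ ((i₂ : ℕ) + 1 + listInv l₂) := by
      rw [hmwt₂, hochi₂, mul_inv, neg_one_pow_inv, pow_add]
      field_simp
      ring
    rw [hval₁, hval₂]
    -- the parity argument
    have hu₁l₁ : u₁ ∉ l₁ := by
      intro h
      have := List.mem_toFinset.2 h
      rw [h₁set, Finset.mem_erase] at this
      exact this.1 rfl
    have hndfull : (u₁ :: (A ++ w :: B)).Nodup := by
      rw [List.nodup_cons, ← hdec1]
      exact ⟨hu₁l₁, h₁nd⟩
    have hperm : s.Perm (u₁ :: (A ++ w :: B)) := by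
      apply List.perm_of_nodup_nodup_toFinset_eq hsnd hndfull
      rw [Finset.sort_toFinset, List.toFinset_cons, ← hdec1, h₁set,
        Finset.insert_erase hu₁U]
    have hpar := parity_main hndfull hperm
    have hcnt₁ : (i₁ : ℕ) = s.countP (fun v => decide (v < u₁)) := by
      have := sorted_get_countP s ((List.sortedLT_iff_pairwise.1 (Finset.sortedLT_sort U))) i₁
      rwa [hi₁] at this
    have hcnt₂ : (i₂ : ℕ) = s.countP (fun v => decide (v < w)) := by
      have := sorted_get_countP s ((List.sortedLT_iff_pairwise.1 (Finset.sortedLT_sort U))) i₂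
      rwa [hi₂] at this
    rw [← hdec2, ← hcnt₁, ← hdec1, ← hcnt₂] at hpar
    apply neg_one_pow_cancel
    have harith : (i₁ : ℕ) + 1 + listInv l₁ + ((i₂ : ℕ) + 1 + listInv l₂)
        = (i₁ : ℕ) + 1 + listInv l₂ + ((i₂ : ℕ) + 1 + listInv l₁) := by omega
    rw [harith]
    exact hpar
  · push_neg at hsurv
    apply Finset.sum_eq_zero
    intro i _
    rw [mwt_eq_zero (hsurv _ (hmemU i)), mul_zero]

/-! ### The functional kills the ideal -/

lemma mwt_zero_of_dep {M : Matroid (Fin n)} (hE : M.E = Set.univ)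
    {χ : Finset (Fin n) → K} {r : List (Fin n)} (hrnd : r.Nodup)
    (hrind : M.Indep ↑r.toFinset) {X : Finset (Fin n)} (hX : ¬ M.Indep ↑X) :
    mwt M χ r X = 0 := by
  apply mwt_eq_zero
  intro hMS
  exact hX (MS_indep hE hrnd hrind hMS)

lemma Ffun_bdry_circuit_mul (M : Matroid (Fin n)) (hE : M.E = Set.univ)
    (χ : Finset (Fin n) → K) (h1 : UC1 M χ) (h2 : UC2 β M χ) (r : List (Fin n))
    (hrnd : r.Nodup) (hrind : M.Indep ↑r.toFinset) {C : Finset (Fin n)}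
    (hC : IsCircuit M C) (hCcard : 1 < C.card) (z : EAlg n K β) :
    Ffun β M χ r (bdry β χ C * z) = 0 := by
  classical
  rw [Ffun, LinearMap.comp_apply, Phi_mul]
  generalize Phi β z = t
  induction t using Finsupp.induction_linear with
  | zero => simp
  | add f g hf hg => rw [map_add, map_add, hf, hg, add_zero]
  | single Z b =>
    by_cases hcase : Disjoint C Z ∧ Unidep M (C ∪ Z)
    · -- use (UC2)
      obtain ⟨hdisj, hUuni⟩ := hcase
      obtain ⟨ε, hε0, heq⟩ := h2 (C ∪ Z) C hUuni (unidep_of_circuit hE hC)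
        Finset.subset_union_left
      have hZeq : (C ∪ Z) \ C = Z := Finset.union_sdiff_cancel_left hdisj
      rw [hZeq] at heq
      have hsingle : (Finsupp.single Z b : TT n K) = b • Phi β (eset β Z) := by
        rw [Phi_eset, Finsupp.smul_single, smul_eq_mul, mul_one]
      rw [hsingle, map_smul, map_smul]
      have hPhiU : Th β (bdry β χ C) (Phi β (eset β Z)) = Phi β (bdry β χ C * eset β Z) :=
        (Phi_mul β _ _).symm
      rw [hPhiU]
      have hF0 : Ffun β M χ r (bdry β χ (C ∪ Z)) = 0 :=
        Ffun_bdry_unidep β M hE χ h1 r hrnd hrind hUuni Finset.subset_union_left hC hCcard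
      rw [heq, map_smul] at hF0
      have : Finsupp.linearCombination K (mwt M χ r) (Phi β (bdry β χ C * eset β Z)) = 0 := by
        have := hF0
        rw [smul_eq_mul, mul_eq_zero] at this
        rcases this with h | h
        · exact absurd h hε0
        · rw [Ffun, LinearMap.comp_apply] at h
          exact h
      rw [this, smul_zero]
    · -- every term dies
      have hexp : Th β (bdry β χ C) =
          ((C.sort (· ≤ ·)).zipIdx.map (fun pi =>
            ((-1:K) ^ (pi.2+1) * χ (C.erase pi.1)) • Th β (eset β (C.erase pi.1)))).sum := by
        rw [bdry, map_list_sum, List.map_map]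
        congr 1
        apply List.map_congr_left
        intro pi _
        show Th β (((-1:K) ^ (pi.2+1) * χ (C.erase pi.1)) • eset β (C.erase pi.1)) = _
        rw [map_smul]
      rw [hexp, end_list_sum_apply, map_list_sum, List.map_map, List.map_map, enum_map_sum]
      apply Finset.sum_eq_zero
      intro i _
      simp only [Function.comp_apply]
      set c : Fin n := (C.sort (· ≤ ·)).get i with hcdef
      have hcC : c ∈ C := by
        have := List.get_mem (C.sort (· ≤ ·)) i
        rwa [← Finset.mem_sort (α := Fin n) (· ≤ ·)]
      rw [LinearMap.smul_apply, map_smul, smul_eq_mul]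
      obtain ⟨γ, hγ, hγ0⟩ := prodgen_act β ((C.erase c).sort (· ≤ ·)) Z b
      rw [Finset.sort_toFinset] at hγ hγ0
      rw [show eset β (C.erase c) = (((C.erase c).sort (· ≤ ·)).map (gen β)).prod from rfl]
      rw [hγ, Finsupp.linearCombination_single]
      by_cases hd : Disjoint (C.erase c) Z
      · -- then C ∩ Z = {c} (nonempty) or C∪Z not unidep
        by_cases hdisjCZ : Disjoint C Z
        · -- then ¬ Unidep (C ∪ Z)
          have hnuni : ¬ Unidep M (C ∪ Z) := fun h => hcase ⟨hdisjCZ, h⟩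
          have hdep := not_unidep_all_erase_dep hE hC hnuni hcC
          have herase : (C ∪ Z).erase c = (C.erase c) ∪ Z := by
            ext x
            rw [Finset.mem_erase, Finset.mem_union, Finset.mem_union, Finset.mem_erase]
            constructor
            · rintro ⟨hxc, hx | hx⟩
              · exact Or.inl ⟨hxc, hx⟩
              · exact Or.inr hx
            · rintro (⟨hxc, hx⟩ | hx)
              · exact ⟨hxc, Or.inl hx⟩
              · refine ⟨?_, Or.inr hx⟩
                intro hxx
                subst hxx
                exact (Finset.disjoint_left.1 hdisjCZ) hcC hx
          rw [herase] at hdep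
          rw [mwt_zero_of_dep hE hrnd hrind ((dep_iff_not_indep hE).1 hdep), smul_eq_mul,
            mul_zero, mul_zero]
        · -- c ∈ Z, so (C.erase c) ∪ Z ⊇ C is dependent
          have hcZ : c ∈ Z := by
            rw [Finset.not_disjoint_iff] at hdisjCZ
            obtain ⟨x, hxC, hxZ⟩ := hdisjCZ
            have : x = c := by
              by_contra hne
              exact (Finset.disjoint_left.1 hd) (Finset.mem_erase.2 ⟨hne, hxC⟩) hxZ
            rwa [← this]
          have hsub : C ⊆ (C.erase c) ∪ Z := by
            intro x hx
            by_cases hxc : x = c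
            · exact Finset.mem_union_right _ (hxc ▸ hcZ)
            · exact Finset.mem_union_left _ (Finset.mem_erase.2 ⟨hxc, hx⟩)
          have hdep : M.Dep ↑((C.erase c) ∪ Z) :=
            hC.1.superset (Finset.coe_subset.2 hsub) (subset_ground_univ hE _)
          rw [mwt_zero_of_dep hE hrnd hrind ((dep_iff_not_indep hE).1 hdep), smul_eq_mul,
            mul_zero, mul_zero]
      · rw [hγ0 hd, zero_mul, smul_eq_mul, zero_mul, mul_zero]

lemma Ffun_gen_loop_mul (M : Matroid (Fin n)) (hE : M.E = Set.univ)
    (χ : Finset (Fin n) → K) (r : List (Fin n)) (hrnd : r.Nodup)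
    (hrind : M.Indep ↑r.toFinset) {i : Fin n} (hCi : IsCircuit M {i}) (z : EAlg n K β) :
    Ffun β M χ r (gen β i * z) = 0 := by
  classical
  rw [Ffun, LinearMap.comp_apply, Phi_mul, Th_gen]
  generalize Phi β z = t
  induction t using Finsupp.induction_linear with
  | zero => simp
  | add f g hf hg => rw [map_add, map_add, hf, hg, add_zero]
  | single Z b =>
    by_cases hiZ : i ∈ Z
    · rw [Lgen_single_mem β hiZ, map_zero]
    · rw [Lgen_single_not_mem β hiZ, Finsupp.linearCombination_single]
      have hdep : M.Dep ↑(insert i Z) := by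
        apply hCi.1.superset _ (subset_ground_univ hE _)
        intro x hx
        have hxi : x = i := by simpa using hx
        subst hxi
        rw [Finset.coe_insert]
        exact Set.mem_insert _ _
      rw [mwt_zero_of_dep hE hrnd hrind ((dep_iff_not_indep hE).1 hdep), smul_zero]

lemma ideal_le_ker (M : Matroid (Fin n)) (hE : M.E = Set.univ)
    (χ : Finset (Fin n) → K) (h1 : UC1 M χ) (h2 : UC2 β M χ) (r : List (Fin n))
    (hrnd : r.Nodup) (hrind : M.Indep ↑r.toFinset) :
    chiIdeal β M χ ≤ LinearMap.ker (Ffun β M χ r) := by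
  rw [chiIdeal, Submodule.span_le]
  rintro y (hy | hy)
  · obtain ⟨C, hC, hcard, z, rfl⟩ := hy
    rw [SetLike.mem_coe, LinearMap.mem_ker]
    exact Ffun_bdry_circuit_mul β M hE χ h1 h2 r hrnd hrind hC hcard z
  · obtain ⟨i, hCi, z, rfl⟩ := hy
    rw [SetLike.mem_coe, LinearMap.mem_ker]
    exact Ffun_gen_loop_mul β M hE χ r hrnd hrind hCi z

/-- the residue functional on the χ-algebra -/
noncomputable def Psi (M : Matroid (Fin n)) (hE : M.E = Set.univ)
    (χ : Finset (Fin n) → K) (h1 : UC1 M χ) (h2 : UC2 β M χ) (r : List (Fin n))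
    (hrnd : r.Nodup) (hrind : M.Indep ↑r.toFinset) :
    AChi β M χ →ₗ[K] K :=
  Submodule.liftQ _ (Ffun β M χ r) (ideal_le_ker β M hE χ h1 h2 r hrnd hrind)

lemma Psi_cls (M : Matroid (Fin n)) (hE : M.E = Set.univ)
    (χ : Finset (Fin n) → K) (h1 : UC1 M χ) (h2 : UC2 β M χ) (r : List (Fin n))
    (hrnd : r.Nodup) (hrind : M.Indep ↑r.toFinset) (X : Finset (Fin n)) :
    Psi β M hE χ h1 h2 r hrnd hrind (cls β M χ X) = mwt M χ r X := by
  rw [cls, Psi, Submodule.liftQ_apply, Ffun_eset]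

end Model
open scoped Classical in
/-- in the NBC expansion `[e_J] = Σ ξ(I,J)[e_I]`, the coefficient
`ξ(I,J)` is nonzero iff `Flag(I) = Flag(J^τ)` for some ordering `τ` of `J`, in which
case `ξ(I,J) = χ(I)/χ(J^τ)`; in the Orlik–Solomon case `ξ(I,J) = sgn(τ)`. -/
theorem nbc_expansion_coeff {n : ℕ} {K : Type*} [Field K] (β : Fin n → Fin n → K)
    (hβ : ∀ i j : Fin n, i < j → β i j ≠ 0)
    (M : Matroid (Fin n)) (hE : M.E = Set.univ)
    (χ : Finset (Fin n) → K) (h1 : UC1 M χ) (h2 : UC2 β M χ)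
    (ℓ : ℕ) (J : Finset (Fin n)) (hJne : cls β M χ J ≠ 0) (hJc : J.card = ℓ)
    (ξ : Finset (Fin n) → K)
    (hsupp : ∀ I : Finset (Fin n), ξ I ≠ 0 → NBCSet M I ∧ I.card = ℓ)
    (hexp : cls β M χ J = ∑ I : Finset (Fin n), ξ I • cls β M χ I) :
    ∀ I : Finset (Fin n), NBCSet M I → I.card = ℓ →
      ((ξ I ≠ 0 ↔ ∃ lj : List (Fin n), lj.Nodup ∧ lj.toFinset = J ∧
          flagOf M lj = flagOf M (I.sort (· ≤ ·))) ∧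
       ∀ lj : List (Fin n), lj.Nodup → lj.toFinset = J →
          flagOf M lj = flagOf M (I.sort (· ≤ ·)) →
         (ξ I = ochi χ (I.sort (· ≤ ·)) / ochi χ lj ∧
          ((χ = fun X : Finset (Fin n) => if M.Indep (↑X : Set (Fin n)) then (1 : K) else 0) →
            ξ I = (-1 : K) ^ listInv lj))) := by
  intro I hI hIcard
  classical
  set r : List (Fin n) := I.sort (· ≤ ·) with hrdef
  have hrnd : r.Nodup := I.sort_nodup _
  have hrset : r.toFinset = I := I.sort_toFinset _
  have hrind : M.Indep ↑r.toFinset := by rw [hrset]; exact hI.1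
  have hχI : χ I ≠ 0 := (h1 I).2 hI.1
  -- apply the residue functional to the expansion
  have hPsiJ : mwt M χ r J = ξ I * (χ I)⁻¹ := by
    have happ := congrArg (Psi β M hE χ h1 h2 r hrnd hrind) hexp
    rw [Psi_cls, map_sum] at happ
    have hsum : ∑ I' : Finset (Fin n),
        Psi β M hE χ h1 h2 r hrnd hrind (ξ I' • cls β M χ I') = ξ I * (χ I)⁻¹ := by
      have hterm : ∀ I' : Finset (Fin n),
          Psi β M hE χ h1 h2 r hrnd hrind (ξ I' • cls β M χ I')
            = ξ I' * mwt M χ r I' := by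
        intro I'
        rw [map_smul, Psi_cls, smul_eq_mul]
      rw [Finset.sum_congr rfl (fun I' _ => hterm I')]
      rw [Finset.sum_eq_single I]
      · have hmwtI : mwt M χ r I = (χ I)⁻¹ := by
          rw [mwt_eq hE hrnd hrind hrnd hrset rfl, hrdef, ochi_sort]
        rw [hmwtI]
      · intro I' _ hne
        by_cases hξ : ξ I' = 0
        · rw [hξ, zero_mul]
        · obtain ⟨hI'NBC, _⟩ := hsupp I' hξ
          have hmwt0 : mwt M χ r I' = 0 := by
            apply mwt_eq_zero
            rintro ⟨l, hnd, hset, hflag⟩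
            apply hne
            have := NBC_rigid hE l r hnd (by rw [hrdef]; exact List.sortedLT_iff_pairwise.1 (Finset.sortedLT_sort I))
              (by rw [hset]; exact hI'NBC) (by rw [hrset]; exact hI) hflag
            rw [hset, hrset] at this
            exact this
          rw [hmwt0, mul_zero]
      · intro habs
        exact absurd (Finset.mem_univ I) habs
    rw [hsum] at happ
    exact happ
  have hMSiff : ξ I ≠ 0 ↔ MS M r J := by
    constructor
    · intro hξ
      by_contra hMS
      rw [mwt_eq_zero hMS] at hPsiJ
      have : ξ I * (χ I)⁻¹ ≠ 0 := mul_ne_zero hξ (inv_ne_zero hχI)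
      exact this hPsiJ.symm
    · rintro hMS
      obtain ⟨lj, hnd, hset, hflag⟩ := hMS
      have hJind : M.Indep ↑J := MS_indep hE hrnd hrind ⟨lj, hnd, hset, hflag⟩
      have hχJ : χ J ≠ 0 := (h1 J).2 hJind
      have hmwt : mwt M χ r J = (ochi χ lj)⁻¹ := mwt_eq hE hrnd hrind hnd hset hflag
      have hochi : ochi χ lj ≠ 0 := by
        rw [ochi_eq, hset]
        exact mul_ne_zero (pow_ne_zero _ (by norm_num)) hχJ
      intro hξ0
      rw [hξ0, zero_mul] at hPsiJ
      rw [hmwt] at hPsiJ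
      exact hochi (inv_eq_zero.1 hPsiJ)
  constructor
  · exact hMSiff
  · intro lj hnd hset hflag
    have hMS : MS M r J := ⟨lj, hnd, hset, hflag⟩
    have hJind : M.Indep ↑J := MS_indep hE hrnd hrind hMS
    have hχJ : χ J ≠ 0 := (h1 J).2 hJind
    have hmwt : mwt M χ r J = (ochi χ lj)⁻¹ := mwt_eq hE hrnd hrind hnd hset hflag
    have hξval : ξ I = ochi χ (I.sort (· ≤ ·)) / ochi χ lj := by
      rw [← hrdef, ochi_sort]
      rw [hmwt] at hPsiJ
      rw [div_eq_mul_inv]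
      have : ξ I = (ochi χ lj)⁻¹ * χ I := by
        rw [hPsiJ, mul_assoc, inv_mul_cancel₀ hχI, mul_one]
      rw [this]
      ring
    refine ⟨hξval, ?_⟩
    intro hOS
    rw [hξval]
    have h1' : ochi χ (I.sort (· ≤ ·)) = 1 := by
      rw [ochi_sort, hOS]
      simp [hI.1]
    have h2' : ochi χ lj = (-1 : K) ^ listInv lj := by
      rw [ochi_eq, hset, hOS]
      simp [hJind]
    rw [h1', h2', one_div, neg_one_pow_inv]
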